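/- For every integer m ≥ 4, the Lie algebra 𝔤⁴_{(m,m−1)} is nilpotent of nilindex 2m−1, is naturally graded (a natural grading being given by 𝔤₁ = span{X₁,X₂}, 𝔤_i = span{X_{i+1}} for 2 ≤ i ≤ 2m−2, and 𝔤_{2m−1} = span{X_{2m},X_{2m+1}}), is (m−1)-abelian (C^{m−1}𝔤 is abelian and C^{m−2}𝔤 is not abelian), and has characteristic sequence (2m−1,1,1): dim ker (ad X₁)^i = min(i, 2m−1) + 2 for every i ≥ 1, while every Y ∉ [𝔤,𝔤] satisfies dim ker(ad Y) ≥ 3. -/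

import Mathlib

open Module

/-- The `i`-th basis vector (1-indexed); `0` when out of range. -/
noncomputable def basisVec {L : Type} [AddCommGroup L] [Module ℂ L] {n : ℕ}
    (b : Basis (Fin n) ℂ L) (i : ℕ) : L :=
  if h : 1 ≤ i ∧ i ≤ n then b ⟨i - 1, by omega⟩ else 0

/-- `b` realizes the structure constants of `𝔤⁴_{(m,m-1)}` (1-indexed basis
`X₁, …, X_{2m+1}`): `[X₁, Xⱼ] = X_{j+1}` for `2 ≤ j ≤ 2m-1`,
`[Xⱼ, X_{2m+1-j}] = (-1)ʲ X_{2m+1}` for `2 ≤ j ≤ m`, all other brackets of basis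
vectors being zero up to antisymmetry. -/
def IsG4Basis {L : Type} [LieRing L] [LieAlgebra ℂ L] (m : ℕ)
    (b : Basis (Fin (2 * m + 1)) ℂ L) : Prop :=
  ∀ a c : ℕ, a < c →
    ⁅basisVec b a, basisVec b c⁆ =
      (if a = 1 ∧ 2 ≤ c ∧ c ≤ 2 * m - 1 then basisVec b (c + 1) else 0) +
      (if 2 ≤ a ∧ a ≤ m ∧ a + c = 2 * m + 1 then
        ((-1 : ℂ)) ^ a • basisVec b (2 * m + 1) else 0)

namespace G4aux

variable {L : Type} [LieRing L] [LieAlgebra ℂ L] {m : ℕ}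

lemma bv (b : Basis (Fin (2 * m + 1)) ℂ L) (v : ℕ) (h : v < 2 * m + 1) :
    basisVec b (v + 1) = b ⟨v, h⟩ := by
  rw [basisVec, dif_pos ⟨by omega, by omega⟩]
  simp

lemma bv1 (b : Basis (Fin (2 * m + 1)) ℂ L) (h : 0 < 2 * m + 1) :
    basisVec b 1 = b ⟨0, h⟩ := bv b 0 h

lemma neg_one_pow_eq (a c : ℕ) (h : a % 2 = c % 2) : ((-1 : ℂ)) ^ a = (-1) ^ c := by
  rw [neg_one_pow_eq_pow_mod_two, h, ← neg_one_pow_eq_pow_mod_two]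

lemma lie_span_le {s t : Set L} {U : Submodule ℂ L}
    (h : ∀ x ∈ s, ∀ y ∈ t, ⁅x, y⁆ ∈ U) :
    ∀ x ∈ Submodule.span ℂ s, ∀ y ∈ Submodule.span ℂ t, ⁅x, y⁆ ∈ U := by
  intro x hx
  refine Submodule.span_induction
    (p := fun x _ => ∀ y ∈ Submodule.span ℂ t, ⁅x, y⁆ ∈ U) ?_ ?_ ?_ ?_ hx
  · intro z hz y hy
    refine Submodule.span_induction (p := fun y _ => ⁅z, y⁆ ∈ U)
      (fun w hw => h z hz w hw) ?_ ?_ ?_ hy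
    · show ⁅z, (0:L)⁆ ∈ U; rw [_root_.lie_zero]; exact U.zero_mem
    · intro a b _ _ ha hb; show ⁅z, a + b⁆ ∈ U; rw [lie_add]; exact U.add_mem ha hb
    · intro c a _ ha; show ⁅z, c • a⁆ ∈ U; rw [lie_smul]; exact U.smul_mem c ha
  · intro y hy; show ⁅(0:L), y⁆ ∈ U; rw [zero_lie]; exact U.zero_mem
  · intro a b _ _ ha hb y hy; show ⁅a + b, y⁆ ∈ U; rw [add_lie]
    exact U.add_mem (ha y hy) (hb y hy)
  · intro c a _ ha y hy; show ⁅c • a, y⁆ ∈ U; rw [smul_lie]; exact U.smul_mem c (ha y hy)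

lemma lie_all_zero (b : Basis (Fin (2 * m + 1)) ℂ L) (c : L)
    (h : ∀ j : Fin (2 * m + 1), ⁅c, b j⁆ = 0) (x : L) : ⁅c, x⁆ = 0 := by
  have had : LieAlgebra.ad ℂ L c = 0 := b.ext fun j => by simpa using h j
  simpa using LinearMap.congr_fun had x

section
variable (hm : 4 ≤ m) (b : Basis (Fin (2 * m + 1)) ℂ L) (hb : IsG4Basis m b)
include hm hb

lemma lie1 (l : ℕ) (h1 : 1 ≤ l) (h2 : l ≤ 2 * m - 2) (hl : l < 2 * m + 1)
    (hl1 : l + 1 < 2 * m + 1) :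
    ⁅b ⟨0, by omega⟩, b ⟨l, hl⟩⁆ = b ⟨l + 1, hl1⟩ := by
  have h := hb 1 (l + 1) (by omega)
  rw [bv1 b (by omega), bv b l hl,
    if_pos ⟨rfl, by omega, by omega⟩, if_neg (by omega), add_zero, bv b (l+1) hl1] at h
  exact h

lemma lie_pair (p q : ℕ) (hp : 1 ≤ p) (hq : 1 ≤ q) (hsum : p + q = 2 * m - 1)
    (hpn : p < 2 * m + 1) (hqn : q < 2 * m + 1) (h2m : 2 * m < 2 * m + 1) :
    ⁅b ⟨p, hpn⟩, b ⟨q, hqn⟩⁆ = (-1 : ℂ) ^ (p + 1) • b ⟨2 * m, h2m⟩ := by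
  rcases lt_trichotomy p q with hlt | heq | hgt
  · have h := hb (p + 1) (q + 1) (by omega)
    rw [bv b p hpn, bv b q hqn, if_neg (by omega),
      if_pos ⟨by omega, by omega, by omega⟩, zero_add, bv b (2 * m) h2m] at h
    exact h
  · omega
  · have h := hb (q + 1) (p + 1) (by omega)
    rw [bv b q hqn, bv b p hpn, if_neg (by omega),
      if_pos ⟨by omega, by omega, by omega⟩, zero_add, bv b (2 * m) h2m] at h
    rw [← lie_skew, h, ← neg_smul]
    rw [neg_one_pow_eq (p + 1) (q + 1 + 1) (by omega), pow_succ, mul_neg_one, neg_neg,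
      neg_one_pow_eq q (q + 1 + 1) (by omega)]

lemma lieZ (p q : ℕ) (hpn : p < 2 * m + 1) (hqn : q < 2 * m + 1)
    (hA : ¬(p = 0 ∧ 1 ≤ q ∧ q ≤ 2 * m - 2)) (hA' : ¬(q = 0 ∧ 1 ≤ p ∧ p ≤ 2 * m - 2))
    (hB : ¬(1 ≤ p ∧ 1 ≤ q ∧ p + q = 2 * m - 1)) :
    ⁅b ⟨p, hpn⟩, b ⟨q, hqn⟩⁆ = 0 := by
  rcases lt_trichotomy p q with hlt | heq | hgt
  · have h := hb (p + 1) (q + 1) (by omega)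
    rw [bv b p hpn, bv b q hqn, if_neg (by omega), if_neg (by omega), add_zero] at h
    exact h
  · subst heq; exact lie_self _
  · have h := hb (q + 1) (p + 1) (by omega)
    rw [bv b q hqn, bv b p hpn, if_neg (by omega), if_neg (by omega), add_zero] at h
    rw [← lie_skew, h, neg_zero]

lemma lie_zero' (p q : Fin (2 * m + 1))
    (hA : ¬(p.val = 0 ∧ 1 ≤ q.val ∧ q.val ≤ 2 * m - 2))
    (hA' : ¬(q.val = 0 ∧ 1 ≤ p.val ∧ p.val ≤ 2 * m - 2))
    (hB : ¬(1 ≤ p.val ∧ 1 ≤ q.val ∧ p.val + q.val = 2 * m - 1)) :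
    ⁅b p, b q⁆ = 0 :=
  lieZ hm b hb p.val q.val p.isLt q.isLt hA hA' hB

lemma central_lie (t : ℕ) (ht : 2 * m - 1 ≤ t) (htn : t < 2 * m + 1) (x : L) :
    ⁅b ⟨t, htn⟩, x⁆ = 0 := by
  refine lie_all_zero b _ (fun j => ?_) x
  exact lie_zero' hm b hb ⟨t, htn⟩ j (by simp only [Fin.val_mk]; omega) (by simp only [Fin.val_mk]; omega) (by simp only [Fin.val_mk]; omega)

lemma lie_central (t : ℕ) (ht : 2 * m - 1 ≤ t) (htn : t < 2 * m + 1) (x : L) :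
    ⁅x, b ⟨t, htn⟩⁆ = 0 := by
  rw [← lie_skew, central_lie hm b hb t ht htn x, neg_zero]

lemma T_b1 (l : ℕ) (h1 : 1 ≤ l) (h2 : l ≤ 2 * m - 2) (hl : l < 2 * m + 1)
    (hl1 : l + 1 < 2 * m + 1) (h0 : 0 < 2 * m + 1) :
    LieAlgebra.ad ℂ L (b ⟨0, h0⟩) (b ⟨l, hl⟩) = b ⟨l + 1, hl1⟩ := by
  rw [LieAlgebra.ad_apply]; exact lie1 hm b hb l h1 h2 hl hl1

lemma T_b0 (j : Fin (2 * m + 1)) (hj : j.val = 0 ∨ 2 * m - 1 ≤ j.val) (h0 : 0 < 2 * m + 1) :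
    LieAlgebra.ad ℂ L (b ⟨0, h0⟩) (b j) = 0 := by
  rw [LieAlgebra.ad_apply]
  rcases hj with hj | hj
  · have : j = ⟨0, h0⟩ := Fin.ext (by simp only [Fin.val_mk]; omega)
    rw [this]; exact lie_self _
  · exact lie_zero' hm b hb ⟨0, h0⟩ j (by simp only [Fin.val_mk]; omega) (by simp only [Fin.val_mk]; omega) (by simp only [Fin.val_mk]; omega)

lemma coord_T (l : ℕ) (h2 : 2 ≤ l) (hl : l ≤ 2 * m - 1) (x : L) (h0 : 0 < 2 * m + 1)
    (hln : l < 2 * m + 1) (hl1 : l - 1 < 2 * m + 1) :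
    b.repr (LieAlgebra.ad ℂ L (b ⟨0, h0⟩) x) ⟨l, hln⟩ = b.repr x ⟨l - 1, hl1⟩ := by
  have key : (b.coord ⟨l, hln⟩) ∘ₗ (LieAlgebra.ad ℂ L (b ⟨0, h0⟩) : L →ₗ[ℂ] L)
      = b.coord ⟨l - 1, hl1⟩ := by
    apply b.ext
    intro j
    simp only [LinearMap.comp_apply, Basis.coord_apply]
    rcases Nat.lt_or_ge j.val 1 with hj | hj
    · rw [T_b0 hm b hb j (Or.inl (by omega)) h0, map_zero, Finsupp.zero_apply,
        Basis.repr_self, Finsupp.single_apply, if_neg (Fin.ne_of_val_ne (by simp only [Fin.val_mk]; omega))]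
    · rcases Nat.lt_or_ge j.val (2 * m - 1) with hj2 | hj2
      · have hje : j = ⟨j.val, j.isLt⟩ := rfl
        rw [hje, T_b1 hm b hb j.val hj (by omega) j.isLt (by omega) h0,
          Basis.repr_self, Basis.repr_self, Finsupp.single_apply, Finsupp.single_apply]
        by_cases hc : j.val + 1 = l
        · rw [if_pos (Fin.ext (by simp only [Fin.val_mk]; omega)), if_pos (Fin.ext (by simp only [Fin.val_mk]; omega))]
        · rw [if_neg (Fin.ne_of_val_ne (by simp only [Fin.val_mk]; omega)),
            if_neg (Fin.ne_of_val_ne (by simp only [Fin.val_mk]; omega))]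
      · rw [T_b0 hm b hb j (Or.inr hj2) h0, map_zero, Finsupp.zero_apply,
        Basis.repr_self, Finsupp.single_apply, if_neg (Fin.ne_of_val_ne (by simp only [Fin.val_mk]; omega))]
  exact LinearMap.congr_fun key x

lemma coord_T_pow (i : ℕ) :
    ∀ (x : L) (jj : ℕ), 1 ≤ jj → ∀ (h2 : jj + i ≤ 2 * m - 1) (ha : jj + i < 2 * m + 1)
      (hjn : jj < 2 * m + 1) (h0 : 0 < 2 * m + 1),
    b.repr ((LieAlgebra.ad ℂ L (b ⟨0, h0⟩) ^ i) x) ⟨jj + i, ha⟩ = b.repr x ⟨jj, hjn⟩ := by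
  induction i with
  | zero =>
    intro x jj h1 h2 ha hjn h0
    rw [pow_zero, Module.End.one_apply]; rfl
  | succ i ih =>
    intro x jj h1 h2 ha hjn h0
    rw [pow_succ, Module.End.mul_apply]
    have e : (⟨jj + (i + 1), ha⟩ : Fin (2 * m + 1)) = ⟨(jj + 1) + i, by omega⟩ :=
      Fin.ext (by simp only [Fin.val_mk]; omega)
    rw [e, ih (LieAlgebra.ad ℂ L (b ⟨0, h0⟩) x) (jj + 1) (by omega) (by omega) (by omega)
      (by omega) h0]
    exact coord_T hm b hb (jj + 1) (by omega) (by omega) x h0 (by omega) (by omega)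

lemma Tpow_basis (t : ℕ) : ∀ (jj : ℕ), 1 ≤ jj → ∀ (h2 : jj + t ≤ 2 * m - 1)
      (hj : jj < 2 * m + 1) (hjt : jj + t < 2 * m + 1) (h0 : 0 < 2 * m + 1),
    (LieAlgebra.ad ℂ L (b ⟨0, h0⟩) ^ t) (b ⟨jj, hj⟩) = b ⟨jj + t, hjt⟩ := by
  induction t with
  | zero => intro jj h1 h2 hj hjt h0; rw [pow_zero, Module.End.one_apply]; rfl
  | succ t ih =>
    intro jj h1 h2 hj hjt h0
    rw [pow_succ, Module.End.mul_apply, T_b1 hm b hb jj h1 (by omega) hj (by omega) h0,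
      ih (jj + 1) (by omega) (by omega) (by omega) (by omega) h0]
    exact congrArg b (Fin.ext (by simp only [Fin.val_mk]; omega))

lemma Tpow_zero (i : ℕ) (hi : 1 ≤ i) (j : Fin (2 * m + 1))
    (hK : j.val = 0 ∨ 2 * m ≤ j.val + i) (h0 : 0 < 2 * m + 1) :
    (LieAlgebra.ad ℂ L (b ⟨0, h0⟩) ^ i) (b j) = 0 := by
  obtain ⟨i', rfl⟩ : ∃ i', i = i' + 1 := ⟨i - 1, by omega⟩
  by_cases hz : j.val = 0
  · rw [pow_succ, Module.End.mul_apply, T_b0 hm b hb j (Or.inl hz) h0, map_zero]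
  · rcases Nat.lt_or_ge j.val (2 * m - 1) with hj2 | hj2
    · have hj1 : 1 ≤ j.val := by omega
      have hsum : 2 * m ≤ j.val + (i' + 1) := by tauto
      set t := 2 * m - 1 - j.val with ht
      have hsplit : i' + 1 = (i' + 1 - t - 1) + 1 + t := by omega
      rw [hsplit, pow_add, pow_add, Module.End.mul_apply, Module.End.mul_apply]
      have hje : b j = b ⟨j.val, j.isLt⟩ := rfl
      rw [hje, Tpow_basis hm b hb t j.val hj1 (by omega) j.isLt (by omega) h0,
        pow_one, T_b0 hm b hb ⟨j.val + t, by omega⟩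
          (Or.inr (by simp only [Fin.val_mk]; omega)) h0, map_zero]
    · rw [pow_succ, Module.End.mul_apply, T_b0 hm b hb j (Or.inr hj2) h0, map_zero]

lemma ker_Tpow (i : ℕ) (hi : 1 ≤ i) (h0 : 0 < 2 * m + 1) :
    LinearMap.ker (LieAlgebra.ad ℂ L (b ⟨0, h0⟩) ^ i)
      = Submodule.span ℂ (b '' {j : Fin (2 * m + 1) | j.val = 0 ∨ 2 * m ≤ j.val + i}) := by
  apply le_antisymm
  · intro x hx
    rw [Basis.mem_span_image]
    intro j hj
    by_contra hnot
    have h1 : 1 ≤ j.val := by simp only [Set.mem_setOf_eq] at hnot; omega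
    have h2 : j.val + i ≤ 2 * m - 1 := by simp only [Set.mem_setOf_eq] at hnot; omega
    have hc := coord_T_pow hm b hb i x j.val h1 h2 (by omega) j.isLt h0
    rw [LinearMap.mem_ker.mp hx, map_zero, Finsupp.zero_apply] at hc
    exact (Finsupp.mem_support_iff.mp hj) hc.symm
  · rw [Submodule.span_le]
    rintro _ ⟨j, hj, rfl⟩
    exact LinearMap.mem_ker.mpr (Tpow_zero hm b hb i hi j hj h0)

end

lemma finrank_span_bimage (b : Basis (Fin (2 * m + 1)) ℂ L) (s : Finset (Fin (2 * m + 1))) :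
    finrank ℂ (Submodule.span ℂ (b '' (s : Set (Fin (2 * m + 1))))) = s.card := by
  classical
  have li : LinearIndependent ℂ ((↑) : (b '' (s : Set (Fin (2 * m + 1)))) → L) :=
    b.linearIndependent.linearIndepOn_id.mono (Set.image_subset_range b _)
  rw [finrank_span_set_eq_card li]
  simp [Set.toFinset_image, Finset.card_image_of_injective _ b.injective]

lemma card_K (i : ℕ) (hi : 1 ≤ i) (hm : 4 ≤ m) :
    (Finset.univ.filter (fun j : Fin (2 * m + 1) => j.val = 0 ∨ 2 * m ≤ j.val + i)).card
      = min i (2 * m - 1) + 2 := by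
  classical
  have hp := Finset.card_filter_add_card_filter_not
    (s := (Finset.univ : Finset (Fin (2 * m + 1))))
    (p := fun j : Fin (2 * m + 1) => j.val = 0 ∨ 2 * m ≤ j.val + i)
  have hcu : (Finset.univ : Finset (Fin (2 * m + 1))).card = 2 * m + 1 := by simp
  have hneg : (Finset.univ.filter
      (fun j : Fin (2 * m + 1) => ¬(j.val = 0 ∨ 2 * m ≤ j.val + i))).card
      = 2 * m - 1 - i := by
    have := Finset.card_bij'
      (s := Finset.univ.filter (fun j : Fin (2 * m + 1) => ¬(j.val = 0 ∨ 2 * m ≤ j.val + i)))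
      (t := Finset.Ico 1 (2 * m - i))
      (fun j _ => j.val)
      (fun k hk => ⟨k, by have := Finset.mem_Ico.mp hk; omega⟩)
      (fun j hj => by
        have hj' := (Finset.mem_filter.mp hj).2
        show j.val ∈ Finset.Ico 1 (2 * m - i)
        rw [Finset.mem_Ico]; omega)
      (fun k hk => by
        have hk' := Finset.mem_Ico.mp hk
        rw [Finset.mem_filter]
        refine ⟨Finset.mem_univ _, ?_⟩
        simp only [Fin.val_mk]; omega)
      (fun j hj => Fin.ext (by simp only [Fin.val_mk]))
      (fun k hk => by simp only [Fin.val_mk])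
    rw [this, Nat.card_Ico]; omega
  rw [hcu] at hp
  rw [hneg] at hp
  omega

section
variable (hm : 4 ≤ m) (b : Basis (Fin (2 * m + 1)) ℂ L) (hb : IsG4Basis m b)
include hm hb

/-- index set for the lower central series -/
def Sk (k : ℕ) : Set (Fin (2 * m + 1)) := {j | k = 0 ∨ k + 1 ≤ j.val}

omit hm hb in
lemma Sk_zero : Sk (m := m) 0 = Set.univ := Set.eq_univ_of_forall fun j => Or.inl rfl

lemma mem_lcs1 : ∀ k, ∀ l : Fin (2 * m + 1), k + 1 ≤ l.val → l.val ≤ 2 * m - 1 →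
    b l ∈ LieModule.lowerCentralSeries ℂ L L k := by
  intro k
  induction k with
  | zero => intro l _ _; exact LieSubmodule.mem_top _
  | succ k ih =>
    intro l h1 h2
    have h0 : (0 : ℕ) < 2 * m + 1 := by omega
    have hrep : b l = ⁅b ⟨0, h0⟩, b ⟨l.val - 1, by omega⟩⁆ := by
      rw [lie1 hm b hb (l.val - 1) (by omega) (by omega) (by omega) (by omega)]
      exact congrArg b (Fin.ext (by simp only [Fin.val_mk]; omega))
    rw [hrep, LieModule.lowerCentralSeries_succ]
    exact LieSubmodule.lie_mem_lie (LieSubmodule.mem_top _)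
      (ih ⟨l.val - 1, by omega⟩ (by simp only [Fin.val_mk]; omega)
        (by simp only [Fin.val_mk]; omega))

lemma mem_lcs_top (k : ℕ) (hk : k ≤ 2 * m - 2) (h2m : 2 * m < 2 * m + 1) :
    b ⟨2 * m, h2m⟩ ∈ LieModule.lowerCentralSeries ℂ L L k := by
  rcases Nat.eq_zero_or_pos k with rfl | hkpos
  · exact LieSubmodule.mem_top _
  · obtain ⟨k', rfl⟩ : ∃ k', k = k' + 1 := ⟨k - 1, by omega⟩
    have hrep : b ⟨2 * m, h2m⟩ = ⁅b ⟨1, by omega⟩, b ⟨2 * m - 2, by omega⟩⁆ := by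
      rw [lie_pair hm b hb 1 (2 * m - 2) (by omega) (by omega) (by omega) (by omega)
        (by omega) h2m]
      norm_num
    rw [hrep, LieModule.lowerCentralSeries_succ]
    exact LieSubmodule.lie_mem_lie (LieSubmodule.mem_top _)
      (mem_lcs1 hm b hb k' ⟨2 * m - 2, by omega⟩ (by simp only [Fin.val_mk]; omega)
        (by simp only [Fin.val_mk]; omega))

omit hm hb in
lemma lcs_step (k : ℕ) (S : Set (Fin (2 * m + 1))) (U : Submodule ℂ L)
    (hle : (LieModule.lowerCentralSeries ℂ L L k).toSubmodule ≤ Submodule.span ℂ (b '' S))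
    (hbr : ∀ (j : Fin (2 * m + 1)), ∀ l ∈ S, ⁅b j, b l⁆ ∈ U) :
    (LieModule.lowerCentralSeries ℂ L L (k + 1)).toSubmodule ≤ U := by
  rw [LieModule.lowerCentralSeries_succ, LieSubmodule.lieIdeal_oper_eq_linear_span',
    Submodule.span_le]
  rintro z ⟨x, -, n, hn, rfl⟩
  have hx : x ∈ Submodule.span ℂ (Set.range b) := b.mem_span x
  have hn' : n ∈ Submodule.span ℂ (b '' S) := hle hn
  refine lie_span_le (fun x' hx' y' hy' => ?_) x hx n hn'
  obtain ⟨j, rfl⟩ := hx'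
  obtain ⟨l, hl, rfl⟩ := hy'
  exact hbr j l hl

lemma br_mem (k : ℕ) (hk : k ≤ 2 * m - 2) (j l : Fin (2 * m + 1))
    (hl : l ∈ Sk (m := m) k) :
    ⁅b j, b l⁆ ∈ Submodule.span ℂ (b '' Sk (m := m) (k + 1)) := by
  have h0 : (0 : ℕ) < 2 * m + 1 := by omega
  have hlv : k = 0 ∨ k + 1 ≤ l.val := hl
  by_cases hj0 : j.val = 0
  · by_cases h1l : 1 ≤ l.val ∧ l.val ≤ 2 * m - 2
    · have hj : j = ⟨0, h0⟩ := Fin.ext (by simp only [Fin.val_mk]; omega)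
      have hle : b l = b ⟨l.val, l.isLt⟩ := rfl
      rw [hj, hle, lie1 hm b hb l.val h1l.1 h1l.2 l.isLt (by omega)]
      exact Submodule.subset_span ⟨⟨l.val + 1, by omega⟩, Or.inr (by simp only [Fin.val_mk]; omega), rfl⟩
    · rw [lie_zero' hm b hb j l (by omega) (by omega) (by omega)]
      exact Submodule.zero_mem _
  · by_cases hl0 : l.val = 0
    · have hkz : k = 0 := by omega
      by_cases h1j : 1 ≤ j.val ∧ j.val ≤ 2 * m - 2
      · have hlf : l = ⟨0, h0⟩ := Fin.ext (by simp only [Fin.val_mk]; omega)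
        have hje : b j = b ⟨j.val, j.isLt⟩ := rfl
        rw [← lie_skew, hlf, hje, lie1 hm b hb j.val h1j.1 h1j.2 j.isLt (by omega)]
        exact Submodule.neg_mem _ (Submodule.subset_span
          ⟨⟨j.val + 1, by omega⟩, Or.inr (by simp only [Fin.val_mk]; omega), rfl⟩)
      · rw [lie_zero' hm b hb j l (by omega) (by omega) (by omega)]
        exact Submodule.zero_mem _
    · by_cases hsum : j.val + l.val = 2 * m - 1
      · have hje : b j = b ⟨j.val, j.isLt⟩ := rfl
        have hle : b l = b ⟨l.val, l.isLt⟩ := rfl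
        rw [hje, hle, lie_pair hm b hb j.val l.val (by omega) (by omega) hsum j.isLt l.isLt
          (by omega)]
        exact Submodule.smul_mem _ _ (Submodule.subset_span
          ⟨⟨2 * m, by omega⟩, Or.inr (by simp only [Fin.val_mk]; omega), rfl⟩)
      · rw [lie_zero' hm b hb j l (by omega) (by omega) (by omega)]
        exact Submodule.zero_mem _

lemma lcs_le : ∀ k, k ≤ 2 * m - 2 →
    (LieModule.lowerCentralSeries ℂ L L k).toSubmodule
      ≤ Submodule.span ℂ (b '' Sk (m := m) k) := by
  intro k
  induction k with
  | zero =>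
    intro _ x _
    rw [Sk_zero, Set.image_univ]
    exact b.mem_span x
  | succ k ih =>
    intro hk
    exact lcs_step b k (Sk (m := m) k) _ (ih (by omega))
      (fun j l hl => br_mem hm b hb k (by omega) j l hl)

lemma span_le_lcs (k : ℕ) (h1 : 1 ≤ k) (hk : k ≤ 2 * m - 2) :
    Submodule.span ℂ (b '' Sk (m := m) k)
      ≤ (LieModule.lowerCentralSeries ℂ L L k).toSubmodule := by
  rw [Submodule.span_le]
  rintro z ⟨l, hl, rfl⟩
  have hlv : k = 0 ∨ k + 1 ≤ l.val := hl
  rcases Nat.lt_or_ge l.val (2 * m) with h | h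
  · exact mem_lcs1 hm b hb k l (by omega) (by omega)
  · have : l = ⟨2 * m, by omega⟩ := Fin.ext (by simp only [Fin.val_mk]; omega)
    rw [this]
    exact mem_lcs_top hm b hb k hk (by omega)

lemma lcs_eq (k : ℕ) (h1 : 1 ≤ k) (hk : k ≤ 2 * m - 2) :
    (LieModule.lowerCentralSeries ℂ L L k).toSubmodule
      = Submodule.span ℂ (b '' Sk (m := m) k) :=
  le_antisymm (lcs_le hm b hb k hk) (span_le_lcs hm b hb k h1 hk)

lemma lcs_bot : LieModule.lowerCentralSeries ℂ L L (2 * m - 1) = ⊥ := by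
  have he : 2 * m - 1 = (2 * m - 2) + 1 := by omega
  have hsub : (LieModule.lowerCentralSeries ℂ L L ((2 * m - 2) + 1)).toSubmodule
      ≤ (⊥ : Submodule ℂ L) := by
    refine lcs_step b (2 * m - 2) (Sk (m := m) (2 * m - 2)) ⊥
      (lcs_le hm b hb (2 * m - 2) le_rfl) ?_
    intro j l hl
    have hlv : 2 * m - 2 = 0 ∨ (2 * m - 2) + 1 ≤ l.val := hl
    have hlv2 : 2 * m - 1 ≤ l.val := by omega
    have hle : b l = b ⟨l.val, l.isLt⟩ := rfl
    rw [hle, lie_central hm b hb l.val (by omega) l.isLt (b j)]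
    exact Submodule.zero_mem _
  rw [he, eq_bot_iff]
  intro x hx
  have := hsub hx
  rw [Submodule.mem_bot] at this
  rw [this]
  exact LieSubmodule.zero_mem _

lemma lcs_ne_bot : LieModule.lowerCentralSeries ℂ L L (2 * m - 2) ≠ ⊥ := by
  intro h
  have hmem : b ⟨2 * m - 1, by omega⟩ ∈ LieModule.lowerCentralSeries ℂ L L (2 * m - 2) :=
    mem_lcs1 hm b hb (2 * m - 2) ⟨2 * m - 1, by omega⟩ (by simp only [Fin.val_mk]; omega)
      (by simp only [Fin.val_mk]; omega)
  rw [h, LieSubmodule.mem_bot] at hmem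
  exact b.ne_zero _ hmem

/-- index sets of the natural grading -/
def gIdx (m : ℕ) (i : ℕ) : Set (Fin (2 * m + 1)) :=
  if i = 1 then {j | j.val ≤ 1}
  else if 2 ≤ i ∧ i ≤ 2 * m - 2 then {j | j.val = i}
  else if i = 2 * m - 1 then {j | 2 * m - 1 ≤ j.val}
  else ∅

omit hm hb in
include hm in
lemma mem_gIdx {i : ℕ} {j : Fin (2 * m + 1)} : j ∈ gIdx m i ↔
    ((i = 1 ∧ j.val ≤ 1) ∨ (2 ≤ i ∧ i ≤ 2 * m - 2 ∧ j.val = i) ∨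
      (i = 2 * m - 1 ∧ 2 * m - 1 ≤ j.val)) := by
  unfold gIdx
  split_ifs with h1 h2 h3 <;>
    simp only [Set.mem_setOf_eq, Set.mem_empty_iff_false, false_iff] <;> omega

omit hb in
lemma gfun_eq (i : ℕ) :
    (if i = 1 then Submodule.span ℂ {basisVec b 1, basisVec b 2}
      else if 2 ≤ i ∧ i ≤ 2 * m - 2 then Submodule.span ℂ {basisVec b (i + 1)}
      else if i = 2 * m - 1 then
        Submodule.span ℂ {basisVec b (2 * m), basisVec b (2 * m + 1)}
      else ⊥)
    = Submodule.span ℂ (b '' gIdx m i) := by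
  unfold gIdx
  split_ifs with h1 h2 h3
  · congr 1
    rw [bv1 b (by omega), show basisVec b 2 = b ⟨1, by omega⟩ from bv b 1 (by omega)]
    ext x
    simp only [Set.mem_insert_iff, Set.mem_singleton_iff, Set.mem_image, Set.mem_setOf_eq]
    constructor
    · rintro (rfl | rfl)
      · exact ⟨⟨0, by omega⟩, by simp only [Set.mem_setOf_eq, Fin.val_mk]; omega, rfl⟩
      · exact ⟨⟨1, by omega⟩, by simp only [Set.mem_setOf_eq, Fin.val_mk]; omega, rfl⟩
    · rintro ⟨j, hj, rfl⟩
      rcases Nat.lt_or_ge j.val 1 with h | h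
      · exact Or.inl (congrArg b (Fin.ext (by simp only [Fin.val_mk]; omega)))
      · exact Or.inr (congrArg b (Fin.ext (by simp only [Fin.val_mk]; omega)))
  · congr 1
    rw [show basisVec b (i + 1) = b ⟨i, by omega⟩ from bv b i (by omega)]
    ext x
    simp only [Set.mem_singleton_iff, Set.mem_image, Set.mem_setOf_eq]
    constructor
    · rintro rfl
      exact ⟨⟨i, by omega⟩, by simp only [Set.mem_setOf_eq, Fin.val_mk], rfl⟩
    · rintro ⟨j, hj, rfl⟩
      exact congrArg b (Fin.ext (by simp only [Fin.val_mk]; omega))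
  · congr 1
    rw [show basisVec b (2 * m) = b ⟨2 * m - 1, by omega⟩ from
        (by rw [basisVec, dif_pos ⟨by omega, by omega⟩]),
      show basisVec b (2 * m + 1) = b ⟨2 * m, by omega⟩ from bv b (2 * m) (by omega)]
    ext x
    simp only [Set.mem_insert_iff, Set.mem_singleton_iff, Set.mem_image, Set.mem_setOf_eq]
    constructor
    · rintro (rfl | rfl)
      · exact ⟨⟨2 * m - 1, by omega⟩, by simp only [Set.mem_setOf_eq, Fin.val_mk]; omega, rfl⟩
      · exact ⟨⟨2 * m, by omega⟩, by simp only [Set.mem_setOf_eq, Fin.val_mk]; omega, rfl⟩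
    · rintro ⟨j, hj, rfl⟩
      rcases Nat.lt_or_ge j.val (2 * m) with h | h
      · exact Or.inl (congrArg b (Fin.ext (by simp only [Fin.val_mk]; omega)))
      · exact Or.inr (congrArg b (Fin.ext (by simp only [Fin.val_mk]; omega)))
  · rw [Set.image_empty, Submodule.span_empty]

omit hm hb in
lemma disjoint_spans (A B : Set (Fin (2 * m + 1)))
    (hAB : ∀ j, j ∈ A → j ∈ B → False) :
    Disjoint (Submodule.span ℂ (b '' A)) (Submodule.span ℂ (b '' B)) := by
  rw [Submodule.disjoint_def]
  intro x hxA hxB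
  have hA := b.mem_span_image.mp hxA
  have hB := b.mem_span_image.mp hxB
  refine b.repr.map_eq_zero_iff.mp (Finsupp.support_eq_empty.mp ?_)
  refine Finset.eq_empty_iff_forall_notMem.mpr fun j hj => ?_
  exact hAB j (hA hj) (hB hj)

omit hb in
lemma gIdx_indep : iSupIndep (fun i => Submodule.span ℂ (b '' gIdx m i)) := by
  intro i
  have hsup : (⨆ (j) (_ : j ≠ i), Submodule.span ℂ (b '' gIdx m j))
      = Submodule.span ℂ (b '' ⋃ (j) (_ : j ≠ i), gIdx m j) := by
    rw [Set.image_iUnion₂, Submodule.span_iUnion₂]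
  rw [hsup]
  refine disjoint_spans b (gIdx m i) _ (fun j hji hju => ?_)
  obtain ⟨k, hk⟩ := Set.mem_iUnion.mp hju
  obtain ⟨hki, hjk⟩ := Set.mem_iUnion.mp hk
  have h1 := (mem_gIdx hm).mp hji
  have h2 := (mem_gIdx hm).mp hjk
  omega

omit hb in
lemma gIdx_union (k : ℕ) (hk : k ≤ 2 * m - 2) :
    (⋃ (i) (_ : k + 1 ≤ i), gIdx m i) = {j : Fin (2 * m + 1) | k = 0 ∨ k + 1 ≤ j.val} := by
  ext j
  simp only [Set.mem_iUnion, Set.mem_setOf_eq]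
  constructor
  · rintro ⟨i, hi, hmem⟩
    have := (mem_gIdx hm).mp hmem
    omega
  · intro hj
    rcases Nat.lt_or_ge j.val 2 with h | h
    · exact ⟨1, by omega, (mem_gIdx hm).mpr (by omega)⟩
    · rcases Nat.lt_or_ge j.val (2 * m - 1) with h2 | h2
      · exact ⟨j.val, by omega, (mem_gIdx hm).mpr (by omega)⟩
      · exact ⟨2 * m - 1, by omega, (mem_gIdx hm).mpr (by omega)⟩

omit hb in
lemma gIdx_union_empty (k : ℕ) (hk : 2 * m - 1 ≤ k) :
    (⋃ (i) (_ : k + 1 ≤ i), gIdx m i) = (∅ : Set (Fin (2 * m + 1))) := by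
  ext j
  simp only [Set.mem_iUnion, Set.mem_empty_iff_false, iff_false, not_exists]
  intro i hi hmem
  have := (mem_gIdx hm).mp hmem
  omega

lemma lcs_sup_eq (k : ℕ) :
    (LieModule.lowerCentralSeries ℂ L L k).toSubmodule
      = ⨆ (i) (_ : k + 1 ≤ i), Submodule.span ℂ (b '' gIdx m i) := by
  have hsup : (⨆ (i) (_ : k + 1 ≤ i), Submodule.span ℂ (b '' gIdx m i))
      = Submodule.span ℂ (b '' ⋃ (i) (_ : k + 1 ≤ i), gIdx m i) := by
    rw [Set.image_iUnion₂, Submodule.span_iUnion₂]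
  rw [hsup]
  rcases Nat.eq_zero_or_pos k with rfl | hk1
  · rw [gIdx_union hm 0 (by omega)]
    have : {j : Fin (2 * m + 1) | 0 = 0 ∨ 0 + 1 ≤ j.val} = Set.univ :=
      Set.eq_univ_of_forall fun j => Or.inl rfl
    rw [this, Set.image_univ, b.span_eq]
    exact LieSubmodule.top_toSubmodule
  · rcases Nat.lt_or_ge k (2 * m - 1) with hk2 | hk2
    · rw [gIdx_union hm k (by omega)]
      have : {j : Fin (2 * m + 1) | k = 0 ∨ k + 1 ≤ j.val} = Sk (m := m) k := rfl
      rw [this]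
      exact lcs_eq hm b hb k hk1 (by omega)
    · rw [gIdx_union_empty hm k hk2, Set.image_empty, Submodule.span_empty]
      have hbot : LieModule.lowerCentralSeries ℂ L L k = ⊥ := by
        have hle := LieModule.antitone_lowerCentralSeries ℂ L L hk2
        rw [lcs_bot hm b hb] at hle
        exact le_bot_iff.mp hle
      rw [hbot]
      exact LieSubmodule.bot_toSubmodule

end
end G4aux

open G4aux

/-- For `m ≥ 4`, `𝔤⁴_{(m,m-1)}` is nilpotent of nilindex `2m-1`, naturally graded via
`g₁ = ⟨X₁,X₂⟩`, `gᵢ = ⟨X_{i+1}⟩` (`2 ≤ i ≤ 2m-2`), `g_{2m-1} = ⟨X_{2m}, X_{2m+1}⟩`,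
is `(m-1)`-abelian, and has characteristic sequence `(2m-1,1,1)`. -/
theorem stmt_6 (L : Type) [LieRing L] [LieAlgebra ℂ L] (m : ℕ) (hm : 4 ≤ m)
    (b : Basis (Fin (2 * m + 1)) ℂ L) (hb : IsG4Basis m b) :
    -- nilpotent of nilindex 2m-1
    (LieModule.lowerCentralSeries ℂ L L (2 * m - 1) = ⊥ ∧
     LieModule.lowerCentralSeries ℂ L L (2 * m - 2) ≠ ⊥) ∧
    -- naturally graded, a natural grading being the given one
    (∀ g : ℕ → Submodule ℂ L,
      (g = fun i =>
        if i = 1 then Submodule.span ℂ {basisVec b 1, basisVec b 2}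
        else if 2 ≤ i ∧ i ≤ 2 * m - 2 then Submodule.span ℂ {basisVec b (i + 1)}
        else if i = 2 * m - 1 then
          Submodule.span ℂ {basisVec b (2 * m), basisVec b (2 * m + 1)}
        else ⊥) →
      (g 0 = ⊥ ∧ iSupIndep g ∧
       (∀ i j : ℕ, ∀ x ∈ g i, ∀ y ∈ g j, ⁅x, y⁆ ∈ g (i + j)) ∧
       (∀ k : ℕ, (LieModule.lowerCentralSeries ℂ L L k).toSubmodule
          = ⨆ i, ⨆ _ : k + 1 ≤ i, g i))) ∧
    -- (m-1)-abelian
    ((∀ x y : L, x ∈ LieModule.lowerCentralSeries ℂ L L (m - 1) →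
        y ∈ LieModule.lowerCentralSeries ℂ L L (m - 1) → ⁅x, y⁆ = 0) ∧
     ¬ (∀ x y : L, x ∈ LieModule.lowerCentralSeries ℂ L L (m - 2) →
        y ∈ LieModule.lowerCentralSeries ℂ L L (m - 2) → ⁅x, y⁆ = 0)) ∧
    -- characteristic sequence (2m-1, 1, 1)
    ((∀ i : ℕ, 1 ≤ i →
        finrank ℂ (LinearMap.ker ((LieAlgebra.ad ℂ L (basisVec b 1)) ^ i))
          = min i (2 * m - 1) + 2) ∧
     (∀ Y : L, Y ∉ LieModule.lowerCentralSeries ℂ L L 1 →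
        3 ≤ finrank ℂ (LinearMap.ker (LieAlgebra.ad ℂ L Y)))) := by
  have h0 : (0 : ℕ) < 2 * m + 1 := by omega
  have hFD : FiniteDimensional ℂ L := Module.Finite.of_basis b
  refine ⟨⟨lcs_bot hm b hb, lcs_ne_bot hm b hb⟩, ?_, ⟨?_, ?_⟩, ?_, ?_⟩
  · -- grading
    intro g hg
    have hge : ∀ i, g i = Submodule.span ℂ (b '' gIdx m i) := by
      intro i; rw [hg]; exact gfun_eq hm b i
    refine ⟨?_, ?_, ?_, ?_⟩
    · rw [hge 0]
      have hempty : gIdx m 0 = ∅ := by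
        unfold gIdx
        rw [if_neg (by omega), if_neg (by omega), if_neg (by omega)]
      rw [hempty, Set.image_empty, Submodule.span_empty]
    · rw [show g = fun i => Submodule.span ℂ (b '' gIdx m i) from funext hge]
      exact gIdx_indep hm b
    · intro i j x hx y hy
      rw [hge i] at hx; rw [hge j] at hy; rw [hge (i + j)]
      refine lie_span_le (fun x' hx' y' hy' => ?_) x hx y hy
      obtain ⟨p, hp, rfl⟩ := hx'
      obtain ⟨q, hq, rfl⟩ := hy'
      have hp' := (mem_gIdx hm).mp hp
      have hq' := (mem_gIdx hm).mp hq
      have hpe : b p = b ⟨p.val, p.isLt⟩ := rfl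
      have hqe : b q = b ⟨q.val, q.isLt⟩ := rfl
      by_cases hp0 : p.val = 0
      · by_cases h1q : 1 ≤ q.val ∧ q.val ≤ 2 * m - 2
        · have hpf : p = ⟨0, h0⟩ := Fin.ext (by simp only [Fin.val_mk]; omega)
          rw [hpf, hqe, lie1 hm b hb q.val h1q.1 h1q.2 q.isLt (by omega)]
          exact Submodule.subset_span ⟨⟨q.val + 1, by omega⟩,
            (mem_gIdx hm).mpr (by simp only [Fin.val_mk]; omega), rfl⟩
        · rw [lie_zero' hm b hb p q (by omega) (by omega) (by omega)]
          exact Submodule.zero_mem _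
      · by_cases hq0 : q.val = 0
        · by_cases h1p : 1 ≤ p.val ∧ p.val ≤ 2 * m - 2
          · have hqf : q = ⟨0, h0⟩ := Fin.ext (by simp only [Fin.val_mk]; omega)
            rw [← lie_skew, hqf, hpe, lie1 hm b hb p.val h1p.1 h1p.2 p.isLt (by omega)]
            exact Submodule.neg_mem _ (Submodule.subset_span ⟨⟨p.val + 1, by omega⟩,
              (mem_gIdx hm).mpr (by simp only [Fin.val_mk]; omega), rfl⟩)
          · rw [lie_zero' hm b hb p q (by omega) (by omega) (by omega)]
            exact Submodule.zero_mem _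
        · by_cases hsum : p.val + q.val = 2 * m - 1
          · rw [hpe, hqe, lie_pair hm b hb p.val q.val (by omega) (by omega) hsum
              p.isLt q.isLt (by omega)]
            exact Submodule.smul_mem _ _ (Submodule.subset_span ⟨⟨2 * m, by omega⟩,
              (mem_gIdx hm).mpr (by simp only [Fin.val_mk]; omega), rfl⟩)
          · rw [lie_zero' hm b hb p q (by omega) (by omega) (by omega)]
            exact Submodule.zero_mem _
    · intro k
      simp only [hge]
      exact lcs_sup_eq hm b hb k
  · -- C^{m-1} abelian
    intro x y hx hy
    have hmeq : (LieModule.lowerCentralSeries ℂ L L (m - 1)).toSubmodule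
        = Submodule.span ℂ (b '' Sk (m := m) (m - 1)) :=
      lcs_eq hm b hb (m - 1) (by omega) (by omega)
    have hx' : x ∈ (LieModule.lowerCentralSeries ℂ L L (m - 1)).toSubmodule := hx
    have hy' : y ∈ (LieModule.lowerCentralSeries ℂ L L (m - 1)).toSubmodule := hy
    rw [hmeq] at hx' hy'
    refine (Submodule.mem_bot ℂ).mp (lie_span_le (U := ⊥) (fun x' hxg y' hyg => ?_) x hx' y hy')
    obtain ⟨p, hp, rfl⟩ := hxg
    obtain ⟨q, hq, rfl⟩ := hyg
    have hpv : (m - 1 : ℕ) = 0 ∨ (m - 1) + 1 ≤ p.val := hp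
    have hqv : (m - 1 : ℕ) = 0 ∨ (m - 1) + 1 ≤ q.val := hq
    rw [lie_zero' hm b hb p q (by omega) (by omega) (by omega)]
    exact Submodule.zero_mem _
  · -- C^{m-2} not abelian
    intro hab
    have h1 : b ⟨m - 1, by omega⟩ ∈ LieModule.lowerCentralSeries ℂ L L (m - 2) :=
      mem_lcs1 hm b hb (m - 2) ⟨m - 1, by omega⟩ (by simp only [Fin.val_mk]; omega)
        (by simp only [Fin.val_mk]; omega)
    have h2 : b ⟨m, by omega⟩ ∈ LieModule.lowerCentralSeries ℂ L L (m - 2) :=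
      mem_lcs1 hm b hb (m - 2) ⟨m, by omega⟩ (by simp only [Fin.val_mk]; omega)
        (by simp only [Fin.val_mk]; omega)
    have h3 := hab _ _ h1 h2
    rw [lie_pair hm b hb (m - 1) m (by omega) (by omega) (by omega) (by omega) (by omega)
      (by omega)] at h3
    exact (smul_ne_zero (pow_ne_zero _ (by norm_num)) (b.ne_zero _)) h3
  · -- characteristic sequence, ad X₁ powers
    intro i hi
    rw [bv1 b h0, ker_Tpow hm b hb i hi h0]
    have hset : {j : Fin (2 * m + 1) | j.val = 0 ∨ 2 * m ≤ j.val + i}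
        = ↑(Finset.univ.filter (fun j : Fin (2 * m + 1) => j.val = 0 ∨ 2 * m ≤ j.val + i)) := by
      ext j; simp
    rw [hset, finrank_span_bimage b _, card_K i hi hm]
  · -- every Y outside the derived algebra
    intro Y hY
    have hYn : Y ∉ Submodule.span ℂ (b '' Sk (m := m) 1) := fun hc =>
      hY (span_le_lcs hm b hb 1 le_rfl (by omega) hc)
    set u : L := b ⟨2 * m - 1, by omega⟩ with hu
    set w : L := b ⟨2 * m, by omega⟩ with hw
    have li2 : LinearIndependent ℂ ![u, w] := by
      refine linearIndependent_fin2.mpr ⟨b.ne_zero _, fun a hcontra => ?_⟩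
      have hcontra' : a • w = u := hcontra
      have hr1 : b.repr u ⟨2 * m - 1, by omega⟩ = 1 := by
        rw [hu, Basis.repr_self]; exact Finsupp.single_eq_same
      have hr2 : b.repr (a • w) ⟨2 * m - 1, by omega⟩ = 0 := by
        rw [map_smul, Finsupp.smul_apply, hw, Basis.repr_self,
          Finsupp.single_eq_of_ne (Fin.ne_of_val_ne (by simp only [Fin.val_mk]; omega)),
          smul_zero]
      rw [hcontra', hr1] at hr2
      exact one_ne_zero hr2
    have hsubr : Set.range ![u, w] ⊆ b '' Sk (m := m) 1 := by
      rw [Set.range_subset_iff]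
      intro s
      fin_cases s
      · exact ⟨⟨2 * m - 1, by omega⟩, Or.inr (by simp only [Fin.val_mk]; omega), rfl⟩
      · exact ⟨⟨2 * m, by omega⟩, Or.inr (by simp only [Fin.val_mk]; omega), rfl⟩
    have hYnr : Y ∉ Submodule.span ℂ (Set.range ![u, w]) := fun hc =>
      hYn (Submodule.span_mono hsubr hc)
    have li3 : LinearIndependent ℂ ![Y, u, w] :=
      linearIndependent_fin_cons.mpr ⟨li2, hYnr⟩
    have hker : Submodule.span ℂ (Set.range ![Y, u, w])
        ≤ LinearMap.ker (LieAlgebra.ad ℂ L Y) := by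
      rw [Submodule.span_le, Set.range_subset_iff]
      intro s
      fin_cases s
      · exact LinearMap.mem_ker.mpr (by rw [LieAlgebra.ad_apply]; exact lie_self Y)
      · exact LinearMap.mem_ker.mpr (by
          rw [LieAlgebra.ad_apply]; exact lie_central hm b hb (2 * m - 1) (by omega) (by omega) Y)
      · exact LinearMap.mem_ker.mpr (by
          rw [LieAlgebra.ad_apply]; exact lie_central hm b hb (2 * m) (by omega) (by omega) Y)
    calc (3 : ℕ) = finrank ℂ (Submodule.span ℂ (Set.range ![Y, u, w])) := by
          rw [finrank_span_eq_card li3, Fintype.card_fin]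
      _ ≤ finrank ℂ (LinearMap.ker (LieAlgebra.ad ℂ L Y)) := Submodule.finrank_mono hker
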